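/- The comultiplication Δ on NSym defined by Δ(Z(t)) = res_{u=0} Z(u) ⊗ (u − Z(t))^{-1} is coassociative. -/

import Mathlib

open scoped TensorProduct

/-- `NSym = ℤ⟨Z_1, Z_2, …⟩`, the free associative ring on generators `Z_i`, `i ≥ 1`. -/
abbrev NSym := FreeAlgebra ℤ {n : ℕ // 0 < n}

instance : Module ℤ NSym := Algebra.toModule

/-- `Z_n` for `n : ℕ`, with the convention `Z_0 = 1`. -/
noncomputable def Zc (n : ℕ) : NSym :=
  if h : 0 < n then FreeAlgebra.ι ℤ ⟨n, h⟩ else 1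

/-- The coefficient of `t^(m+1)` in `res_{u=0} Z(u) ⊗ (u - Z(t))⁻¹`:
`Σ_{k≤m} Z_k ⊗ Σ_{m_0+⋯+m_k = m-k} Z_{m_0} ⋯ Z_{m_k}`. -/
noncomputable def deltaZ (m : ℕ) : NSym ⊗[ℤ] NSym :=
  ∑ k ∈ Finset.range (m + 1),
    Zc k ⊗ₜ[ℤ] ∑ f ∈ Finset.Nat.antidiagonalTuple (k + 1) (m - k),
      (List.ofFn fun j => Zc (f j)).prod

/-- The comultiplication `Δ : NSym → NSym ⊗ NSym`, extended to all of `NSym` as a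
ring homomorphism from its values `Δ(Z_m) = deltaZ m` on generators. -/
noncomputable def deltaBFK : NSym →ₐ[ℤ] NSym ⊗[ℤ] NSym :=
  FreeAlgebra.lift ℤ fun n : {n : ℕ // 0 < n} => deltaZ n

open Finset PowerSeries

noncomputable def Q : PowerSeries NSym := PowerSeries.mk Zc

noncomputable def P (k s : ℕ) : NSym := PowerSeries.coeff s (Q ^ (k + 1))

lemma P_zero (s : ℕ) : P 0 s = Zc s := by
  simp [P, Q, PowerSeries.coeff_mk]

lemma tuple_sum_eq_P (k s : ℕ) :
    ∑ f ∈ Finset.Nat.antidiagonalTuple (k + 1) s,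
      (List.ofFn fun j => Zc (f j)).prod = P k s := by
  induction k generalizing s with
  | zero => simp [Finset.Nat.antidiagonalTuple_one, P_zero]
  | succ k ih =>
      rw [P, pow_succ', PowerSeries.coeff_mul]
      have : ∀ p ∈ Finset.HasAntidiagonal.antidiagonal s,
          (PowerSeries.coeff p.1) Q * (PowerSeries.coeff p.2) (Q ^ (k+1)) =
          Zc p.1 * ∑ f ∈ Finset.Nat.antidiagonalTuple (k + 1) p.2,
            (List.ofFn fun j => Zc (f j)).prod := by
        intro p _
        rw [ih p.2]
        simp [Q, PowerSeries.coeff_mk, P]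
      rw [Finset.sum_congr rfl this]
      simp_rw [Finset.mul_sum]
      rw [Finset.sum_sigma']
      refine Finset.sum_nbij' (i := fun (f : Fin (k+1+1) → ℕ) => (⟨(f 0, ∑ i : Fin (k+1), f i.succ), Fin.tail f⟩ : Σ _ : ℕ × ℕ, (Fin (k+1) → ℕ)))
        (j := fun (q : Σ _ : ℕ × ℕ, (Fin (k+1) → ℕ)) => Fin.cons q.1.1 q.2) ?_ ?_ ?_ ?_ ?_
      · intro f hf
        simp only [Finset.Nat.mem_antidiagonalTuple] at hf
        simp only [Finset.mem_sigma, Finset.HasAntidiagonal.mem_antidiagonal,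
          Finset.Nat.mem_antidiagonalTuple]
        refine ⟨?_, by simp [Fin.tail]⟩
        rw [← Fin.sum_univ_succ]
        exact hf
      · intro q hq
        simp only [Finset.mem_sigma, Finset.HasAntidiagonal.mem_antidiagonal,
          Finset.Nat.mem_antidiagonalTuple] at hq
        simp only [Finset.Nat.mem_antidiagonalTuple, Fin.sum_cons]
        rw [hq.2]; exact hq.1
      · intro f _
        exact Fin.cons_self_tail f
      · intro q hq
        simp only [Finset.mem_sigma, Finset.HasAntidiagonal.mem_antidiagonal,
          Finset.Nat.mem_antidiagonalTuple] at hq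
        refine Sigma.ext ?_ (heq_of_eq (by simp [Fin.tail_cons]))
        refine Prod.ext (by simp) ?_
        simpa using hq.2
      · intro f _
        rw [List.ofFn_succ]
        simp [Fin.tail]

lemma deltaZ_eq (m : ℕ) :
    deltaZ m = ∑ p ∈ Finset.HasAntidiagonal.antidiagonal m, Zc p.1 ⊗ₜ[ℤ] P p.1 p.2 := by
  rw [deltaZ, Finset.Nat.sum_antidiagonal_eq_sum_range_succ_mk]
  refine Finset.sum_congr rfl fun k hk => ?_
  rw [tuple_sum_eq_P]

noncomputable def Q2 : PowerSeries (NSym ⊗[ℤ] NSym) := PowerSeries.mk deltaZ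

lemma deltaBFK_Zc (n : ℕ) : deltaBFK (Zc n) = deltaZ n := by
  rcases Nat.eq_zero_or_pos n with h | h
  · subst h
    rw [deltaZ_eq]
    simp [Zc, P_zero, Algebra.TensorProduct.one_def]
  · rw [Zc, dif_pos h, deltaBFK, FreeAlgebra.lift_ι_apply]

lemma deltaBFK_P (k s : ℕ) :
    deltaBFK (P k s) = PowerSeries.coeff s (Q2 ^ (k + 1)) := by
  have hmap : PowerSeries.map deltaBFK.toRingHom Q = Q2 := by
    ext n
    simp [Q, Q2, PowerSeries.coeff_map, PowerSeries.coeff_mk, deltaBFK_Zc]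
  rw [P]
  show deltaBFK.toRingHom _ = _
  rw [← hmap, ← map_pow, PowerSeries.coeff_map]

lemma antidiagonal_assoc {M : Type*} [AddCommMonoid M] (s : ℕ) (f : ℕ → ℕ → ℕ → M) :
    ∑ p ∈ Finset.HasAntidiagonal.antidiagonal s, ∑ q ∈ Finset.HasAntidiagonal.antidiagonal p.1, f q.1 q.2 p.2
      = ∑ p ∈ Finset.HasAntidiagonal.antidiagonal s, ∑ q ∈ Finset.HasAntidiagonal.antidiagonal p.2, f p.1 q.1 q.2 := by
  rw [Finset.sum_sigma', Finset.sum_sigma']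
  refine Finset.sum_nbij' (i := fun (x : Σ _ : ℕ × ℕ, ℕ × ℕ) => (⟨(x.2.1, x.2.2 + x.1.2), (x.2.2, x.1.2)⟩ : Σ _ : ℕ × ℕ, ℕ × ℕ))
    (j := fun (x : Σ _ : ℕ × ℕ, ℕ × ℕ) => (⟨(x.1.1 + x.2.1, x.2.2), (x.1.1, x.2.1)⟩ : Σ _ : ℕ × ℕ, ℕ × ℕ)) ?_ ?_ ?_ ?_ ?_
  · intro x hx
    obtain ⟨⟨a,b⟩,⟨c,d⟩⟩ := x
    simp only [Finset.mem_sigma, Finset.HasAntidiagonal.mem_antidiagonal, and_true] at hx ⊢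
    omega
  · intro x hx
    obtain ⟨⟨a,b⟩,⟨c,d⟩⟩ := x
    simp only [Finset.mem_sigma, Finset.HasAntidiagonal.mem_antidiagonal, and_true] at hx ⊢
    omega
  · intro x hx
    obtain ⟨⟨a,b⟩,⟨c,d⟩⟩ := x
    simp only [Finset.mem_sigma, Finset.HasAntidiagonal.mem_antidiagonal] at hx
    refine Sigma.ext (Prod.ext ?_ ?_) (heq_of_eq rfl) <;> simp <;> omega
  · intro x hx
    obtain ⟨⟨a,b⟩,⟨c,d⟩⟩ := x
    simp only [Finset.mem_sigma, Finset.HasAntidiagonal.mem_antidiagonal] at hx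
    refine Sigma.ext (Prod.ext ?_ ?_) (heq_of_eq rfl) <;> simp <;> omega
  · intro x hx
    rfl

lemma antidiagonal_middle_swap {M : Type*} [AddCommMonoid M] (s : ℕ) (f : ℕ → ℕ → ℕ → ℕ → M) :
    ∑ p ∈ Finset.HasAntidiagonal.antidiagonal s, ∑ q ∈ Finset.HasAntidiagonal.antidiagonal p.1, ∑ r ∈ Finset.HasAntidiagonal.antidiagonal p.2,
      f q.1 q.2 r.1 r.2
    = ∑ p ∈ Finset.HasAntidiagonal.antidiagonal s, ∑ q ∈ Finset.HasAntidiagonal.antidiagonal p.1, ∑ r ∈ Finset.HasAntidiagonal.antidiagonal p.2,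
      f q.1 r.1 q.2 r.2 := by
  simp_rw [← Finset.sum_product']
  rw [Finset.sum_sigma', Finset.sum_sigma']
  refine Finset.sum_nbij' (i := fun (x : Σ _ : ℕ × ℕ, (ℕ × ℕ) × ℕ × ℕ) =>
      (⟨(x.2.1.1 + x.2.2.1, x.2.1.2 + x.2.2.2), ((x.2.1.1, x.2.2.1), (x.2.1.2, x.2.2.2))⟩ : Σ _ : ℕ × ℕ, (ℕ × ℕ) × ℕ × ℕ))
    (j := fun (x : Σ _ : ℕ × ℕ, (ℕ × ℕ) × ℕ × ℕ) =>
      (⟨(x.2.1.1 + x.2.2.1, x.2.1.2 + x.2.2.2), ((x.2.1.1, x.2.2.1), (x.2.1.2, x.2.2.2))⟩ : Σ _ : ℕ × ℕ, (ℕ × ℕ) × ℕ × ℕ)) ?_ ?_ ?_ ?_ ?_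
  · intro x hx
    obtain ⟨⟨a,b⟩,⟨⟨i,u⟩,⟨r,v⟩⟩⟩ := x
    simp only [Finset.mem_sigma, Finset.HasAntidiagonal.mem_antidiagonal, Finset.mem_product, and_true] at hx ⊢
    omega
  · intro x hx
    obtain ⟨⟨a,b⟩,⟨⟨i,u⟩,⟨r,v⟩⟩⟩ := x
    simp only [Finset.mem_sigma, Finset.HasAntidiagonal.mem_antidiagonal, Finset.mem_product, and_true] at hx ⊢
    omega
  · intro x hx
    obtain ⟨⟨a,b⟩,⟨⟨i,u⟩,⟨r,v⟩⟩⟩ := x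
    simp only [Finset.mem_sigma, Finset.HasAntidiagonal.mem_antidiagonal, Finset.mem_product] at hx
    refine Sigma.ext (Prod.ext ?_ ?_) (heq_of_eq rfl) <;> simp <;> omega
  · intro x hx
    obtain ⟨⟨a,b⟩,⟨⟨i,u⟩,⟨r,v⟩⟩⟩ := x
    simp only [Finset.mem_sigma, Finset.HasAntidiagonal.mem_antidiagonal, Finset.mem_product] at hx
    refine Sigma.ext (Prod.ext ?_ ?_) (heq_of_eq rfl) <;> simp <;> omega
  · intro x hx
    rfl

lemma P_succ_left (j c : ℕ) :
    P (j + 1) c = ∑ q ∈ Finset.HasAntidiagonal.antidiagonal c, Zc q.1 * P j q.2 := by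
  rw [P, pow_succ', PowerSeries.coeff_mul]
  refine Finset.sum_congr rfl fun q _ => ?_
  simp [Q, PowerSeries.coeff_mk, P]

lemma P_mul (i w e : ℕ) :
    P (i + w + 1) e = ∑ q ∈ Finset.HasAntidiagonal.antidiagonal e, P i q.1 * P w q.2 := by
  have : i + w + 1 + 1 = (i + 1) + (w + 1) := by omega
  rw [P, this, pow_add, PowerSeries.coeff_mul]
  rfl

lemma coeff_Q2_pow (j : ℕ) : ∀ s : ℕ,
    PowerSeries.coeff s (Q2 ^ (j + 1))
      = ∑ p ∈ Finset.HasAntidiagonal.antidiagonal s, P j p.1 ⊗ₜ[ℤ] P (j + p.1) p.2 := by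
  induction j with
  | zero =>
      intro s
      rw [pow_one, Q2, PowerSeries.coeff_mk, deltaZ_eq]
      refine Finset.sum_congr rfl fun p _ => ?_
      rw [P_zero, Nat.zero_add]
  | succ j ih =>
      intro s
      rw [pow_succ', PowerSeries.coeff_mul]
      have lhs_eq : ∀ p ∈ Finset.HasAntidiagonal.antidiagonal s,
          (PowerSeries.coeff p.1) Q2 * (PowerSeries.coeff p.2) (Q2 ^ (j + 1))
          = ∑ q ∈ Finset.HasAntidiagonal.antidiagonal p.1, ∑ r ∈ Finset.HasAntidiagonal.antidiagonal p.2,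
              (Zc q.1 * P j r.1) ⊗ₜ[ℤ] (P q.1 q.2 * P (j + r.1) r.2) := by
        intro p _
        rw [show (PowerSeries.coeff p.1) Q2 = deltaZ p.1 from PowerSeries.coeff_mk _ _,
          deltaZ_eq, ih p.2, Finset.sum_mul_sum]
        exact Finset.sum_congr rfl fun q _ => Finset.sum_congr rfl fun r _ =>
          Algebra.TensorProduct.tmul_mul_tmul _ _ _ _
      rw [Finset.sum_congr rfl lhs_eq]
      rw [antidiagonal_middle_swap s
        (fun i u r v => (Zc i * P j r) ⊗ₜ[ℤ] (P i u * P (j + r) v))]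
      refine Finset.sum_congr rfl fun p hp => ?_
      rw [P_succ_left, TensorProduct.sum_tmul]
      refine Finset.sum_congr rfl fun q hq => ?_
      simp only [Finset.HasAntidiagonal.mem_antidiagonal] at hq
      have : j + 1 + p.1 = q.1 + (j + q.2) + 1 := by omega
      rw [this, P_mul, TensorProduct.tmul_sum]


/-- The comultiplication `Δ` on `NSym` defined by
`Δ(Z(t)) = res_{u=0} Z(u) ⊗ (u - Z(t))⁻¹` is coassociative. -/
theorem deltaBFK_coassoc (a : NSym) :
    (Algebra.TensorProduct.assoc ℤ ℤ ℤ NSym NSym NSym)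
        ((Algebra.TensorProduct.map deltaBFK (AlgHom.id ℤ NSym)) (deltaBFK a)) =
      (Algebra.TensorProduct.map (AlgHom.id ℤ NSym) deltaBFK) (deltaBFK a) := by
  have key : ((Algebra.TensorProduct.assoc ℤ ℤ ℤ NSym NSym NSym).toAlgHom.comp
        ((Algebra.TensorProduct.map deltaBFK (AlgHom.id ℤ NSym)).comp deltaBFK))
      = (Algebra.TensorProduct.map (AlgHom.id ℤ NSym) deltaBFK).comp deltaBFK := by
    apply FreeAlgebra.hom_ext
    funext n
    show (Algebra.TensorProduct.assoc ℤ ℤ ℤ NSym NSym NSym)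
        ((Algebra.TensorProduct.map deltaBFK (AlgHom.id ℤ NSym))
          (deltaBFK (FreeAlgebra.ι ℤ n)))
      = (Algebra.TensorProduct.map (AlgHom.id ℤ NSym) deltaBFK)
          (deltaBFK (FreeAlgebra.ι ℤ n))
    rw [show deltaBFK (FreeAlgebra.ι ℤ n) = deltaZ n.1 from FreeAlgebra.lift_ι_apply _ _,
      deltaZ_eq, map_sum, map_sum, map_sum]
    have hL : ∀ p ∈ Finset.HasAntidiagonal.antidiagonal (n : ℕ),
        (Algebra.TensorProduct.assoc ℤ ℤ ℤ NSym NSym NSym)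
          ((Algebra.TensorProduct.map deltaBFK (AlgHom.id ℤ NSym))
            (Zc p.1 ⊗ₜ[ℤ] P p.1 p.2))
        = ∑ q ∈ Finset.HasAntidiagonal.antidiagonal p.1,
            Zc q.1 ⊗ₜ[ℤ] (P q.1 q.2 ⊗ₜ[ℤ] P (q.1 + q.2) p.2) := by
      intro p _
      rw [Algebra.TensorProduct.map_tmul, AlgHom.id_apply, deltaBFK_Zc, deltaZ_eq,
        TensorProduct.sum_tmul, map_sum]
      refine Finset.sum_congr rfl fun q hq => ?_
      simp only [Finset.HasAntidiagonal.mem_antidiagonal] at hq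
      rw [Algebra.TensorProduct.assoc_tmul, hq]
      rfl
    have hR : ∀ p ∈ Finset.HasAntidiagonal.antidiagonal (n : ℕ),
        (Algebra.TensorProduct.map (AlgHom.id ℤ NSym) deltaBFK)
          (Zc p.1 ⊗ₜ[ℤ] P p.1 p.2)
        = ∑ q ∈ Finset.HasAntidiagonal.antidiagonal p.2,
            Zc p.1 ⊗ₜ[ℤ] (P p.1 q.1 ⊗ₜ[ℤ] P (p.1 + q.1) q.2) := by
      intro p _
      rw [Algebra.TensorProduct.map_tmul, AlgHom.id_apply, deltaBFK_P,
        coeff_Q2_pow, TensorProduct.tmul_sum]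
      rfl
    rw [Finset.sum_congr rfl hL, Finset.sum_congr rfl hR]
    exact antidiagonal_assoc (n : ℕ)
      (fun j u t => Zc j ⊗ₜ[ℤ] (P j u ⊗ₜ[ℤ] P (j + u) t))
  exact DFunLike.congr_fun key a
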